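/- Smooth regularizer case: suppose R is convex and L'-smooth, F = (1/p)∑φ_k with each φ_k μ_k-strongly convex and L_k-smooth, F itself L-smooth, and w* = argmin(F+R). With w_k*(a) = argmin_w P_k(w;a) where P_k(w;a) = φ_k(w)+(∇F(a)-∇φ_k(a))ᵀw+R(w), one has ‖w* - w_k*(a)‖ ≤ ((L_k+L)/μ_k)‖a - w*‖ for all a. -/

import Mathlib

open Set InnerProductSpace

variable {E : Type*} [NormedAddCommGroup E] [InnerProductSpace ℝ E] [CompleteSpace E]

/-- Subgradient inequality for a differentiable convex function on `univ`. -/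
lemma grad_convex_ineq (g : E → ℝ) (gg : E → E)
    (hg : ∀ x, HasGradientAt g (gg x) x) (hc : ConvexOn ℝ Set.univ g)
    (x y : E) : inner ℝ (gg x) (y - x) ≤ g y - g x := by
  set c : ℝ → E := fun t => x + t • (y - x) with hc_def
  have hder : ∀ t : ℝ, HasDerivAt (fun t => g (c t)) (inner ℝ (gg (c t)) (y - x)) t := by
    intro t
    have h1 : HasDerivAt c (y - x) t := by
      simpa [hc_def] using ((hasDerivAt_id t).smul_const (y - x)).const_add x
    have := (hg (c t)).hasFDerivAt.comp_hasDerivAt t h1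
    exact this.congr_deriv (by simp)
  have hconv : ConvexOn ℝ Set.univ (fun t : ℝ => g (c t)) := by
    have haff : ConvexOn ℝ ((AffineMap.lineMap x y : ℝ →ᵃ[ℝ] E) ⁻¹' Set.univ)
        (g ∘ (AffineMap.lineMap x y : ℝ →ᵃ[ℝ] E)) := hc.comp_affineMap _
    simp only [Set.preimage_univ] at haff
    convert haff using 1
    ext t
    simp [hc_def, AffineMap.lineMap_apply, Function.comp]
    rw [add_comm]
  have hle := hconv.le_slope_of_hasDerivAt (Set.mem_univ (0:ℝ)) (Set.mem_univ (1:ℝ))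
    zero_lt_one (hder 0)
  have hc0 : c 0 = x := by simp [hc_def]
  have hc1 : c 1 = y := by simp [hc_def]
  rw [slope_def_field] at hle
  simp [hc0, hc1] at hle
  simpa [hc0] using hle

/-- Strong monotonicity of the gradient of a strongly convex function. -/
lemma strong_mono (f : E → ℝ) (gf : E → E) (μ : ℝ)
    (hg : ∀ x, HasGradientAt f (gf x) x) (hsc : StrongConvexOn Set.univ μ f)
    (u v : E) : μ * ‖u - v‖ ^ 2 ≤ inner ℝ (gf u - gf v) (u - v) := by
  set g : E → ℝ := fun x => f x - μ / 2 * ‖x‖ ^ 2 with hgdef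
  have hgc : ConvexOn ℝ Set.univ g := strongConvexOn_iff_convex.mp hsc
  have hgg : ∀ x, HasGradientAt g (gf x - μ • x) x := by
    intro x
    rw [hasGradientAt_iff_hasFDerivAt]
    have h1 : HasFDerivAt (fun x : E => μ / 2 * ‖x‖ ^ 2)
        ((μ / 2) • (2 • (innerSL ℝ x))) x :=
      (hasStrictFDerivAt_norm_sq x).hasFDerivAt.const_smul (μ / 2)
    have h2 := (hg x).hasFDerivAt.sub h1
    refine h2.congr_fderiv ?_
    ext w
    simp [inner_sub_left, inner_smul_left, real_inner_smul_left]
    ring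
  have h1 := grad_convex_ineq g _ hgg hgc u v
  have h2 := grad_convex_ineq g _ hgg hgc v u
  have hvu : v - u = -(u - v) := by abel
  rw [hvu, inner_neg_right] at h1
  have hsum : (0:ℝ) ≤ inner ℝ (gf u - μ • u - (gf v - μ • v)) (u - v) := by
    rw [inner_sub_left]
    linarith
  have hexp : inner ℝ (gf u - μ • u - (gf v - μ • v)) (u - v)
      = inner ℝ (gf u - gf v) (u - v) - μ * ‖u - v‖ ^ 2 := by
    have : gf u - μ • u - (gf v - μ • v) = (gf u - gf v) - μ • (u - v) := by
      simp [smul_sub]; abel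
    rw [this, inner_sub_left, real_inner_smul_left, real_inner_self_eq_norm_sq]
  linarith [hexp ▸ hsum]


/-- Smooth regularizer case: the local minimizers satisfy
`‖w* - w_k*(a)‖ ≤ ((L_k + L)/μ_k)‖a - w*‖`. -/
theorem local_minimizer_distance_bound
    (d : ℕ)
    (F R φk : EuclideanSpace ℝ (Fin d) → ℝ)
    (gF gR gφ : EuclideanSpace ℝ (Fin d) → EuclideanSpace ℝ (Fin d))
    (μk Lk L : ℝ) (hμk : 0 < μk) (hLk : 0 ≤ Lk) (hL : 0 ≤ L)
    (hFgrad : ∀ x, HasGradientAt F (gF x) x)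
    (hRgrad : ∀ x, HasGradientAt R (gR x) x)
    (hφgrad : ∀ x, HasGradientAt φk (gφ x) x)
    (hR : ConvexOn ℝ Set.univ R)
    (hsc : StrongConvexOn Set.univ μk (fun w => φk w + R w))
    (hφlip : ∀ x y, ‖gφ x - gφ y‖ ≤ Lk * ‖x - y‖)
    (hFlip : ∀ x y, ‖gF x - gF y‖ ≤ L * ‖x - y‖)
    (wstar : EuclideanSpace ℝ (Fin d))
    (hwopt : gF wstar + gR wstar = 0)
    (wk : EuclideanSpace ℝ (Fin d) → EuclideanSpace ℝ (Fin d))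
    -- first-order optimality of `w_k*(a)` for `P_k(·;a)`
    (hwkopt : ∀ a, gφ (wk a) + (gF a - gφ a) + gR (wk a) = 0)
    (a : EuclideanSpace ℝ (Fin d)) :
    ‖wstar - wk a‖ ≤ (Lk + L) / μk * ‖a - wstar‖ := by
  set u := wk a
  set v := wstar
  have hgrad : ∀ x, HasGradientAt (fun w => φk w + R w) (gφ x + gR x) x := by
    intro x
    rw [hasGradientAt_iff_hasFDerivAt]
    have h2 := (hφgrad x).hasFDerivAt.add (hRgrad x).hasFDerivAt
    refine h2.congr_fderiv ?_
    ext w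
    simp [inner_add_left]
  have hmono := strong_mono (fun w => φk w + R w) (fun x => gφ x + gR x) μk hgrad hsc u v
  -- identify the gradient difference
  have hu : gφ u + gR u = gφ a - gF a := by
    have := hwkopt a
    have h : gφ u + gR u + (gF a - gφ a) = 0 := by rw [← this]; abel
    have := eq_neg_of_add_eq_zero_left h
    rw [this]; abel
  have hv : gφ v + gR v = gφ v - gF v := by
    have h : gR v = -gF v := by
      have := eq_neg_of_add_eq_zero_right hwopt
      exact this
    rw [h]; abel
  have hdiff : (gφ u + gR u) - (gφ v + gR v) = (gφ a - gφ v) - (gF a - gF v) := by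
    rw [hu, hv]; abel
  rw [hdiff] at hmono
  have hcs : inner ℝ ((gφ a - gφ v) - (gF a - gF v)) (u - v)
      ≤ ‖(gφ a - gφ v) - (gF a - gF v)‖ * ‖u - v‖ := real_inner_le_norm _ _
  have hnorm : ‖(gφ a - gφ v) - (gF a - gF v)‖ ≤ (Lk + L) * ‖a - v‖ := by
    calc ‖(gφ a - gφ v) - (gF a - gF v)‖ ≤ ‖gφ a - gφ v‖ + ‖gF a - gF v‖ := norm_sub_le _ _
    _ ≤ Lk * ‖a - v‖ + L * ‖a - v‖ := add_le_add (hφlip a v) (hFlip a v)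
    _ = (Lk + L) * ‖a - v‖ := by ring
  have hkey : μk * ‖u - v‖ ^ 2 ≤ (Lk + L) * ‖a - v‖ * ‖u - v‖ := by
    calc μk * ‖u - v‖ ^ 2 ≤ ‖(gφ a - gφ v) - (gF a - gF v)‖ * ‖u - v‖ := le_trans hmono hcs
    _ ≤ (Lk + L) * ‖a - v‖ * ‖u - v‖ :=
        mul_le_mul_of_nonneg_right hnorm (norm_nonneg _)
  rw [norm_sub_rev]
  rw [div_mul_eq_mul_div, le_div_iff₀ hμk]
  rcases eq_or_lt_of_le (norm_nonneg (u - v)) with h0 | h0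
  · rw [← h0, zero_mul]
    exact mul_nonneg (by linarith) (norm_nonneg _)
  · nlinarith [hkey, h0]
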